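/- Let Λ ⊆ ℝ^M be a nonempty closed convex set, μ > 0, L > 0, η₂ = 1/L, and let Q : ℝ^M → ℝ be differentiable with L-Lipschitz gradient such that h(λ) := Q(λ) − (μ/2)‖λ‖₂² is convex. Let λ* be a minimizer of Q over Λ, let λ₀ ∈ Λ, and for s = 0, 1, 2, … let e_s ∈ ℝ^M and λ_{s+1} = argmin_{λ ∈ Λ} { ⟨∇h(λ_s) + e_s, λ⟩ + (μ/2)‖λ‖₂² + (1/(2η₂))‖λ − λ_s‖₂² }. Set c_s = (1 + μ η₂)^s. Then for every m ≥ 1: ( ∑_{s=1}^m c_{s−1} [Q(λ_s) − Q(λ*)] ) / ( ∑_{s=1}^m c_{s−1} ) ≤ (1 + μη₂)^{−m+1} / (2η₂) · ‖λ* − λ₀‖₂² + 2 (1 + μη₂)^{−m+1} ( ∑_{s=0}^{m−1} √η₂ (1 + μη₂)^{s/2} ‖e_s‖₂ )². -/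

import Mathlib

open scoped RealInnerProductSpace
open Set


variable {F : Type*} [NormedAddCommGroup F] [InnerProductSpace ℝ F] [CompleteSpace F]

lemma hasGradientAt_half_normSq (μ : ℝ) (x : F) :
    HasGradientAt (fun y : F => μ / 2 * ‖y‖ ^ 2) (μ • x) x := by
  have h1 : HasFDerivAt (fun y : F => ⟪y, y⟫)
      ((fderivInnerCLM ℝ (x, x)).comp ((ContinuousLinearMap.id ℝ F).prod
        (ContinuousLinearMap.id ℝ F))) x :=
    (hasFDerivAt_id x).inner ℝ (hasFDerivAt_id x)
  have h2 := h1.const_mul (μ / 2)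
  have h3 : HasFDerivAt (fun y : F => μ / 2 * ‖y‖ ^ 2)
      ((μ / 2) • ((fderivInnerCLM ℝ (x, x)).comp ((ContinuousLinearMap.id ℝ F).prod
        (ContinuousLinearMap.id ℝ F)))) x := by
    simpa only [real_inner_self_eq_norm_sq] using h2
  rw [hasGradientAt_iff_hasFDerivAt]
  refine h3.congr_fderiv (Eq.symm ?_)
  apply ContinuousLinearMap.ext
  intro d
  simp only [ContinuousLinearMap.smul_apply, ContinuousLinearMap.comp_apply,
    ContinuousLinearMap.prod_apply, ContinuousLinearMap.id_apply, fderivInnerCLM_apply,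
    InnerProductSpace.toDual_apply_apply, real_inner_smul_left, smul_eq_mul]
  rw [real_inner_comm d x]
  ring

lemma hasGradientAt_sub_half_normSq {Q : F → ℝ} (hQ : Differentiable ℝ Q) (μ : ℝ) (x : F) :
    HasGradientAt (fun y : F => Q y - μ / 2 * ‖y‖ ^ 2) (gradient Q x - μ • x) x := by
  have h1 : HasGradientAt Q (gradient Q x) x := (hQ x).hasGradientAt
  have h2 := hasGradientAt_half_normSq (F := F) μ x
  rw [hasGradientAt_iff_hasFDerivAt] at h1 h2 ⊢
  rw [map_sub]
  exact h1.sub h2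

lemma fderiv_apply_eq_inner_gradient {f : F → ℝ} {z : F} (hf : DifferentiableAt ℝ f z) (d : F) :
    fderiv ℝ f z d = ⟪gradient f z, d⟫ := by
  have h1 : fderiv ℝ f z = InnerProductSpace.toDual ℝ F (gradient f z) :=
    hf.hasFDerivAt.unique hf.hasGradientAt.hasFDerivAt
  rw [h1, InnerProductSpace.toDual_apply_apply]

/-- first-order condition for convexity -/
lemma convexOn_inner_grad_le {f : F → ℝ} (hf : ConvexOn ℝ Set.univ f)
    {x g : F} (hg : HasGradientAt f g x) (y : F) :
    f x + ⟪g, y - x⟫ ≤ f y := by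
  have line : HasDerivAt (fun t : ℝ => x + t • (y - x)) (y - x) 0 := by
    simpa using ((hasDerivAt_id (0:ℝ)).smul_const (y - x)).const_add x
  have hD : HasDerivAt (fun t : ℝ => f (x + t • (y - x))) ⟪g, y - x⟫ 0 := by
    have hgx : HasFDerivAt f (InnerProductSpace.toDual ℝ F g) (x + (0:ℝ) • (y - x)) := by
      simpa using hg.hasFDerivAt
    have := hgx.comp_hasDerivAt 0 line
    exact this
  set φ : ℝ → ℝ := fun t => f (x + t • (y - x)) with hφ
  have hslope : ∀ t ∈ Ioc (0:ℝ) 1, slope φ 0 t ≤ f y - f x := by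
    intro t ht
    have hconv := hf.2 (Set.mem_univ x) (Set.mem_univ y)
      (by linarith [ht.1.le, ht.2] : (0:ℝ) ≤ 1 - t) ht.1.le (by ring)
    have hxt : (1 - t) • x + t • y = x + t • (y - x) := by
      rw [smul_sub, sub_smul, one_smul]; abel
    rw [hxt] at hconv
    have hφt : φ t ≤ (1 - t) * f x + t * f y := by
      simpa [hφ, smul_eq_mul] using hconv
    have hφ0 : φ 0 = f x := by simp [hφ]
    rw [slope_def_field, hφ0, sub_zero, div_le_iff₀ ht.1]
    nlinarith [ht.1]
  have htend : Filter.Tendsto (slope φ 0) (nhdsWithin 0 (Ioi 0)) (nhds ⟪g, y - x⟫) := by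
    have h0 := hasDerivAt_iff_tendsto_slope.1 hD
    exact h0.mono_left (nhdsWithin_mono _ (fun t ht => ne_of_gt ht))
  have hle : ⟪g, y - x⟫ ≤ f y - f x := by
    refine le_of_tendsto htend ?_
    filter_upwards [Ioc_mem_nhdsGT (zero_lt_one)] with t ht
    exact hslope t ht
  linarith

/-- descent lemma: quadratic upper bound from Lipschitz gradient -/
lemma descent_lemma {Q : F → ℝ} (hQ : Differentiable ℝ Q) {L : ℝ}
    (hlip : ∀ x y : F, ‖gradient Q x - gradient Q y‖ ≤ L * ‖x - y‖) (x y : F) :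
    Q y ≤ Q x + ⟪gradient Q x, y - x⟫ + L / 2 * ‖y - x‖ ^ 2 := by
  set d := y - x with hd
  set ψ : ℝ → ℝ := fun t => Q (x + t • d) - t * ⟪gradient Q x, d⟫ - L / 2 * ‖d‖ ^ 2 * t ^ 2
    with hψ
  have line : ∀ t : ℝ, HasDerivAt (fun s : ℝ => x + s • d) d t := fun t => by
    simpa using ((hasDerivAt_id t).smul_const d).const_add x
  have hcompD : ∀ t : ℝ, HasDerivAt (fun s : ℝ => Q (x + s • d))
      ⟪gradient Q (x + t • d), d⟫ t := by
    intro t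
    have hgz : HasFDerivAt Q (InnerProductSpace.toDual ℝ F (gradient Q (x + t • d)))
        (x + t • d) := (hQ (x + t • d)).hasGradientAt.hasFDerivAt
    have := hgz.comp_hasDerivAt t (line t)
    exact this
  have hψd : ∀ t : ℝ, HasDerivAt ψ
      (⟪gradient Q (x + t • d), d⟫ - ⟪gradient Q x, d⟫ - L * ‖d‖ ^ 2 * t) t := by
    intro t
    have h1 : HasDerivAt (fun s : ℝ => s * ⟪gradient Q x, d⟫) ⟪gradient Q x, d⟫ t := by
      simpa using (hasDerivAt_id t).mul_const ⟪gradient Q x, d⟫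
    have h2 : HasDerivAt (fun s : ℝ => L / 2 * ‖d‖ ^ 2 * s ^ 2) (L * ‖d‖ ^ 2 * t) t := by
      have := (hasDerivAt_pow 2 t).const_mul (L / 2 * ‖d‖ ^ 2)
      refine this.congr_deriv (Eq.symm ?_)
      ring
    exact ((hcompD t).sub h1).sub h2
  have hanti : AntitoneOn ψ (Icc (0:ℝ) 1) := by
    apply antitoneOn_of_deriv_nonpos (convex_Icc 0 1)
    · exact fun t _ => ((hψd t).continuousAt).continuousWithinAt
    · intro t _
      exact ((hψd t).differentiableAt).differentiableWithinAt
    · intro t ht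
      rw [interior_Icc] at ht
      rw [(hψd t).deriv]
      have hlip' : ‖gradient Q (x + t • d) - gradient Q x‖ ≤ L * (t * ‖d‖) := by
        have := hlip (x + t • d) x
        simpa [norm_smul, abs_of_pos ht.1] using this
      have hcs : ⟪gradient Q (x + t • d), d⟫ - ⟪gradient Q x, d⟫ ≤ L * (t * ‖d‖) * ‖d‖ := by
        have h3 : ⟪gradient Q (x + t • d) - gradient Q x, d⟫ ≤
            ‖gradient Q (x + t • d) - gradient Q x‖ * ‖d‖ := real_inner_le_norm _ _
        rw [inner_sub_left] at h3
        have h4 : ‖gradient Q (x + t • d) - gradient Q x‖ * ‖d‖ ≤ L * (t * ‖d‖) * ‖d‖ :=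
          mul_le_mul_of_nonneg_right hlip' (norm_nonneg d)
        linarith
      nlinarith [hcs]
  have h01 : ψ 1 ≤ ψ 0 := hanti (Set.left_mem_Icc.2 zero_le_one)
    (Set.right_mem_Icc.2 zero_le_one) zero_le_one
  have hψ0 : ψ 0 = Q x := by simp [hψ]
  have hψ1 : ψ 1 = Q y - ⟪gradient Q x, d⟫ - L / 2 * ‖d‖ ^ 2 := by
    simp [hψ, hd]
  rw [hψ0, hψ1] at h01
  linarith

/-- variational inequality for the prox step -/
lemma prox_vi {Λ : Set F} (hconv : Convex ℝ Λ) {μ η : ℝ} (hμ : 0 < μ) (hη : 0 < η)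
    {v z w : F} (hw : w ∈ Λ)
    (hmin : IsMinOn (fun x => ⟪v, x⟫ + μ / 2 * ‖x‖ ^ 2 + 1 / (2 * η) * ‖x - z‖ ^ 2) Λ w) :
    ∀ y ∈ Λ, 0 ≤ η * ⟪v + μ • w, y - w⟫ + ⟪w - z, y - w⟫ := by
  have hηne : η ≠ 0 := ne_of_gt hη
  have hβpos : 0 < η * μ + 1 := by positivity
  have hβne : η * μ + 1 ≠ 0 := ne_of_gt hβpos
  set β : ℝ := η * μ + 1 with hβdef
  set p : F := (η * μ + 1)⁻¹ • (z - η • v) with hp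
  have hxp : ∀ x : F, ⟪x, p⟫ = (η * μ + 1)⁻¹ * (⟪x, z⟫ - η * ⟪x, v⟫) := by
    intro x
    rw [hp, real_inner_smul_right, inner_sub_right, real_inner_smul_right]
  have key : ∀ x : F, 2 * η * (⟪v, x⟫ + μ / 2 * ‖x‖ ^ 2 + 1 / (2 * η) * ‖x - z‖ ^ 2)
      = β * ‖x - p‖ ^ 2 + (‖z‖ ^ 2 - β * ‖p‖ ^ 2) := by
    intro x
    have hvx : ⟪v, x⟫ = ⟪x, v⟫ := real_inner_comm _ _
    rw [norm_sub_sq_real x p, norm_sub_sq_real x z, hxp x, hvx, hβdef]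
    field_simp
    ring
  have hproj : ∀ y ∈ Λ, ‖p - w‖ ≤ ‖p - y‖ := by
    intro y hy
    have h1 : (fun x => ⟪v, x⟫ + μ / 2 * ‖x‖ ^ 2 + 1 / (2 * η) * ‖x - z‖ ^ 2) w
        ≤ (fun x => ⟪v, x⟫ + μ / 2 * ‖x‖ ^ 2 + 1 / (2 * η) * ‖x - z‖ ^ 2) y := hmin hy
    have h1' : β * ‖w - p‖ ^ 2 ≤ β * ‖y - p‖ ^ 2 := by
      have hw2 := key w
      have hy2 := key y
      simp only at h1
      nlinarith [h1]
    have h2 : ‖w - p‖ ^ 2 ≤ ‖y - p‖ ^ 2 := le_of_mul_le_mul_left h1' hβpos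
    rw [norm_sub_rev p w, norm_sub_rev p y,
      ← Real.sqrt_sq (norm_nonneg (w - p)), ← Real.sqrt_sq (norm_nonneg (y - p))]
    exact Real.sqrt_le_sqrt h2
  have hbdd : BddBelow (Set.range fun y : Λ => ‖p - (y : F)‖) := by
    refine ⟨0, ?_⟩
    rintro r ⟨y, rfl⟩
    exact norm_nonneg _
  haveI : Nonempty Λ := ⟨⟨w, hw⟩⟩
  have hinf : ‖p - w‖ = ⨅ y : Λ, ‖p - (y : F)‖ :=
    le_antisymm (le_ciInf fun y => hproj y y.2) (ciInf_le hbdd (⟨w, hw⟩ : Λ))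
  intro y hy
  have hVI0 : ⟪p - w, y - w⟫ ≤ 0 :=
    (norm_eq_iInf_iff_real_inner_le_zero hconv hw).1 hinf y hy
  have h5 : 0 ≤ ⟪w - p, y - w⟫ := by
    have hrw : p - w = -(w - p) := by abel
    rw [hrw, inner_neg_left] at hVI0
    linarith
  have hE : η * ⟪v + μ • w, y - w⟫ + ⟪w - z, y - w⟫ = β * ⟪w - p, y - w⟫ := by
    have h6 : ⟪w - p, y - w⟫
        = ⟪w, y - w⟫ - (η * μ + 1)⁻¹ * (⟪z, y - w⟫ - η * ⟪v, y - w⟫) := by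
      rw [inner_sub_left]
      congr 1
      rw [hp, real_inner_smul_left, inner_sub_left, real_inner_smul_left]
    rw [h6, inner_add_left, real_inner_smul_left, inner_sub_left, hβdef]
    field_simp
    ring
  rw [hE]
  exact mul_nonneg (le_of_lt hβpos) h5

/-- discrete Gronwall-type bound for the inexact recursion -/
lemma seq_bound (v b : ℕ → ℝ) (hv : ∀ j, 0 ≤ v j) (hb : ∀ s, 0 ≤ b s)
    (h : ∀ j, v j ^ 2 ≤ v 0 ^ 2 + 2 * ∑ s ∈ Finset.range j, b s * v (s + 1)) :
    ∀ j, v j ≤ v 0 + 2 * ∑ s ∈ Finset.range j, b s := by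
  intro j
  induction j using Nat.strong_induction_on with
  | _ j IH =>
    match j with
    | 0 => simp
    | (k+1) =>
      by_cases hc : v (k+1) ≤ v 0 + 2 * ∑ s ∈ Finset.range (k+1), b s
      · exact hc
      push_neg at hc
      exfalso
      have hBnn : (0:ℝ) ≤ ∑ s ∈ Finset.range (k+1), b s :=
        Finset.sum_nonneg fun s _ => hb s
      have hmono : ∀ s, s < k + 1 → v (s+1) ≤ v (k+1) := by
        intro s hs
        rcases Nat.lt_or_ge (s+1) (k+1) with hlt | hge
        · have h1 := IH (s+1) (by omega)
          have h2 : ∑ i ∈ Finset.range (s+1), b i ≤ ∑ i ∈ Finset.range (k+1), b i :=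
            Finset.sum_le_sum_of_subset_of_nonneg
              (Finset.range_subset_range.2 (by omega)) (fun i _ _ => hb i)
          linarith
        · have : s + 1 = k + 1 := by omega
          rw [this]
      have hsum : ∑ s ∈ Finset.range (k+1), b s * v (s+1)
          ≤ (∑ s ∈ Finset.range (k+1), b s) * v (k+1) := by
        rw [Finset.sum_mul]
        refine Finset.sum_le_sum fun s hs => ?_
        exact mul_le_mul_of_nonneg_left (hmono s (Finset.mem_range.1 hs)) (hb s)
      have hj := h (k+1)
      nlinarith [hv 0, hv (k+1)]

/-- one-step inequality for the inexact proximal gradient step -/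
lemma key_step {Λ : Set F} (hΛconv : Convex ℝ Λ) {μ L η : ℝ}
    (hμ : 0 < μ) (hL : 0 < L) (hη : η = 1 / L)
    {Q : F → ℝ} (hQdiff : Differentiable ℝ Q)
    (hQlip : ∀ x y : F, ‖gradient Q x - gradient Q y‖ ≤ L * ‖x - y‖)
    (hhconv : ConvexOn ℝ Set.univ (fun x => Q x - μ / 2 * ‖x‖ ^ 2))
    {a b ee w : F} (ha : a ∈ Λ) (hwΛ : w ∈ Λ)
    (hwmin : IsMinOn
      (fun x => ⟪gradient (fun y => Q y - μ / 2 * ‖y‖ ^ 2) b + ee, x⟫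
        + μ / 2 * ‖x‖ ^ 2 + 1 / (2 * η) * ‖x - b‖ ^ 2) Λ w) :
    2 * η * (Q w - Q a) + (1 + μ * η) * ‖a - w‖ ^ 2
      ≤ ‖a - b‖ ^ 2 + 2 * η * (‖ee‖ * ‖a - w‖) := by
  have hηpos : 0 < η := by rw [hη]; positivity
  have h2η : (0:ℝ) ≤ 2 * η := by positivity
  set g : F := gradient Q b with hg
  -- descent lemma
  have hd0 : Q w ≤ Q b + ⟪g, w - b⟫ + L / 2 * ‖w - b‖ ^ 2 := descent_lemma hQdiff hQlip b w
  have Hd := mul_le_mul_of_nonneg_left hd0 h2η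
  -- convexity of h
  have hgradh := hasGradientAt_sub_half_normSq hQdiff μ b
  have hs0 := convexOn_inner_grad_le hhconv hgradh a
  have Hs := mul_le_mul_of_nonneg_left hs0 h2η
  -- variational inequality
  have hmin' : IsMinOn
      (fun x => ⟪(g - μ • b + ee), x⟫ + μ / 2 * ‖x‖ ^ 2 + 1 / (2 * η) * ‖x - b‖ ^ 2) Λ w := by
    have hge : gradient (fun y => Q y - μ / 2 * ‖y‖ ^ 2) b = g - μ • b := hgradh.gradient
    rw [hge] at hwmin
    exact hwmin
  have hvi0 := prox_vi hΛconv hμ hηpos hwΛ hmin' a ha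
  have Hvi : 0 ≤ 2 * (η * ⟪(g - μ • b + ee) + μ • w, a - w⟫ + ⟪w - b, a - w⟫) := by linarith
  -- Cauchy-Schwarz
  have hcs0 : ⟪ee, a - w⟫ ≤ ‖ee‖ * ‖a - w‖ := real_inner_le_norm _ _
  have Hcs := mul_le_mul_of_nonneg_left hcs0 h2η
  -- expansions
  have e1 : ⟪g, w - b⟫ = ⟪g, w⟫ - ⟪g, b⟫ := inner_sub_right _ _ _
  have e2 : ⟪g - μ • b, a - b⟫ = ⟪g, a⟫ - ⟪g, b⟫ - μ * (⟪a, b⟫ - ‖b‖ ^ 2) := by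
    simp only [inner_sub_left, inner_sub_right, real_inner_smul_left]
    rw [real_inner_comm b a, real_inner_self_eq_norm_sq]
    ring
  have e3 : ⟪(g - μ • b + ee) + μ • w, a - w⟫
      = (⟪g, a⟫ - ⟪g, w⟫) - μ * (⟪a, b⟫ - ⟪b, w⟫) + (⟪ee, a⟫ - ⟪ee, w⟫)
        + μ * (⟪a, w⟫ - ‖w‖ ^ 2) := by
    simp only [inner_add_left, inner_sub_left, inner_sub_right, real_inner_smul_left]
    rw [real_inner_comm b a, real_inner_comm w a, real_inner_self_eq_norm_sq]
    ring
  have e4 : ⟪w - b, a - w⟫ = ⟪a, w⟫ - ‖w‖ ^ 2 - ⟪a, b⟫ + ⟪b, w⟫ := by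
    simp only [inner_sub_left, inner_sub_right]
    rw [real_inner_comm w a, real_inner_comm b a, real_inner_self_eq_norm_sq]
    ring
  have e5 : ⟪ee, a - w⟫ = ⟪ee, a⟫ - ⟪ee, w⟫ := inner_sub_right _ _ _
  have e6 : ‖a - w‖ ^ 2 = ‖a‖ ^ 2 - 2 * ⟪a, w⟫ + ‖w‖ ^ 2 := norm_sub_sq_real a w
  have e7 : ‖a - b‖ ^ 2 = ‖a‖ ^ 2 - 2 * ⟪a, b⟫ + ‖b‖ ^ 2 := norm_sub_sq_real a b
  have e8 : ‖w - b‖ ^ 2 = ‖w‖ ^ 2 - 2 * ⟪b, w⟫ + ‖b‖ ^ 2 := by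
    rw [norm_sub_sq_real, real_inner_comm w b]
  have hηL : η * L = 1 := by rw [hη]; field_simp
  have hzzL : η * L * ‖w - b‖ ^ 2 = ‖w‖ ^ 2 - 2 * ⟪b, w⟫ + ‖b‖ ^ 2 := by
    rw [hηL, one_mul, e8]
  have hslack : 0 ≤ μ * η * (‖w‖ ^ 2 - 2 * ⟪b, w⟫ + ‖b‖ ^ 2) := by
    rw [← e8]; positivity
  rw [e1] at Hd
  rw [e2] at Hs
  rw [e3, e4] at Hvi
  rw [e5] at Hcs
  rw [e6, e7]
  linarith [Hd, Hs, Hvi, Hcs, hzzL, hslack]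


set_option maxHeartbeats 2000000 in
/-- Lemma 9 / Lemma inexact-md of the paper: for a
`μ`-strongly convex (`h(λ) = Q(λ) − (μ/2)‖λ‖²` convex) and `L`-smooth dual
function `Q` minimized over the nonempty closed convex set `Λ` by proximal
gradient descent with step size `η₂ = 1/L` and additive gradient errors `e_s`,
the geometrically weighted average of the suboptimality gaps satisfies, for
every `m ≥ 1`, with `c_s = (1 + μη₂)^s`:
`(∑_{s=1}^m c_{s−1}[Q(λ_s) − Q(λ*)]) / (∑_{s=1}^m c_{s−1})
  ≤ (1+μη₂)^{−m+1}/(2η₂) ‖λ* − λ₀‖²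
    + 2 (1+μη₂)^{−m+1} (∑_{s=0}^{m−1} √η₂ (1+μη₂)^{s/2} ‖e_s‖)²`. -/
theorem stmt_16 {M : ℕ}
    (Λ : Set (EuclideanSpace ℝ (Fin M)))
    (hΛne : Λ.Nonempty) (hΛcl : IsClosed Λ) (hΛconv : Convex ℝ Λ)
    (μ : ℝ) (hμ : 0 < μ) (L : ℝ) (hL : 0 < L) (η₂ : ℝ) (hη₂ : η₂ = 1 / L)
    (Q : EuclideanSpace ℝ (Fin M) → ℝ) (hQdiff : Differentiable ℝ Q)
    (hQlip : ∀ x y : EuclideanSpace ℝ (Fin M),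
      ‖gradient Q x - gradient Q y‖ ≤ L * ‖x - y‖)
    (hhconv : ConvexOn ℝ Set.univ (fun x => Q x - μ / 2 * ‖x‖ ^ 2))
    (lamStar : EuclideanSpace ℝ (Fin M)) (hstarmem : lamStar ∈ Λ)
    (hstarmin : IsMinOn Q Λ lamStar)
    (e : ℕ → EuclideanSpace ℝ (Fin M))
    (lam : ℕ → EuclideanSpace ℝ (Fin M)) (h₀ : lam 0 ∈ Λ)
    (hstep : ∀ s : ℕ, lam (s + 1) ∈ Λ ∧
      IsMinOn
        (fun x => ⟪gradient (fun y => Q y - μ / 2 * ‖y‖ ^ 2) (lam s) + e s, x⟫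
          + μ / 2 * ‖x‖ ^ 2 + 1 / (2 * η₂) * ‖x - lam s‖ ^ 2) Λ (lam (s + 1))) :
    ∀ m : ℕ, 1 ≤ m →
      (∑ s ∈ Finset.range m, (1 + μ * η₂) ^ s * (Q (lam (s + 1)) - Q lamStar))
          / (∑ s ∈ Finset.range m, (1 + μ * η₂) ^ s)
        ≤ (1 + μ * η₂) ^ (-(m : ℤ) + 1) / (2 * η₂) * ‖lamStar - lam 0‖ ^ 2
          + 2 * (1 + μ * η₂) ^ (-(m : ℤ) + 1) *
            (∑ s ∈ Finset.range m,
              Real.sqrt η₂ * (1 + μ * η₂) ^ ((s : ℝ) / 2) * ‖e s‖) ^ 2 := by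
  intro m hm
  have hηpos : 0 < η₂ := by rw [hη₂]; positivity
  set c : ℝ := 1 + μ * η₂ with hcdef
  have hμη : 0 < μ * η₂ := mul_pos hμ hηpos
  have hcpos : 0 < c := by rw [hcdef]; linarith
  have hc1 : 1 ≤ c := by rw [hcdef]; linarith
  have hcne : c ≠ 0 := ne_of_gt hcpos
  set sc : ℝ := Real.sqrt c with hscdef
  have hscpos : 0 < sc := Real.sqrt_pos.2 hcpos
  have hscne : sc ≠ 0 := ne_of_gt hscpos
  have hsc2 : sc ^ 2 = c := Real.sq_sqrt hcpos.le
  have hpowsc : ∀ j : ℕ, (sc ^ j) ^ 2 = c ^ j := fun j => by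
    rw [← pow_mul, mul_comm, pow_mul, hsc2]
  set u : ℕ → ℝ := fun s => ‖lamStar - lam s‖ with hu
  set v : ℕ → ℝ := fun s => sc ^ s * u s with hv
  set β : ℕ → ℝ := fun s => η₂ * sc ^ s * ‖e s‖ / sc with hβ
  have hunn : ∀ s, 0 ≤ u s := fun s => norm_nonneg _
  have hvnn : ∀ s, 0 ≤ v s := fun s =>
    mul_nonneg (pow_nonneg hscpos.le _) (hunn s)
  have hβnn : ∀ s, 0 ≤ β s := fun s =>
    div_nonneg (mul_nonneg (mul_nonneg hηpos.le (pow_nonneg hscpos.le _)) (norm_nonneg _))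
      hscpos.le
  have hΔnn : ∀ s : ℕ, 0 ≤ Q (lam (s + 1)) - Q lamStar := fun s =>
    sub_nonneg.2 (hstarmin (hstep s).1)
  -- per-step inequality
  have key : ∀ s : ℕ, 2 * η₂ * (Q (lam (s + 1)) - Q lamStar) + c * u (s + 1) ^ 2
      ≤ u s ^ 2 + 2 * η₂ * (‖e s‖ * u (s + 1)) := by
    intro s
    have hks := key_step hΛconv hμ hL hη₂ hQdiff hQlip hhconv hstarmem (hstep s).1 (hstep s).2
    simpa [hu, hcdef] using hks
  -- telescoped inequality
  have T : ∀ j : ℕ,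
      2 * η₂ * (∑ s ∈ Finset.range j, c ^ s * (Q (lam (s + 1)) - Q lamStar)) + v j ^ 2
        ≤ v 0 ^ 2 + 2 * ∑ s ∈ Finset.range j, β s * v (s + 1) := by
    intro j
    induction j with
    | zero => simp
    | succ j ih =>
      have hk := key j
      have hcj : (0:ℝ) ≤ c ^ j := by positivity
      have hk' := mul_le_mul_of_nonneg_left hk hcj
      have ea : c ^ j * (c * u (j + 1) ^ 2) = v (j + 1) ^ 2 := by
        have h1 : v (j + 1) ^ 2 = (sc ^ (j + 1)) ^ 2 * u (j + 1) ^ 2 := by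
          rw [hv]; ring
        rw [h1, hpowsc, pow_succ]; ring
      have eb : c ^ j * u j ^ 2 = v j ^ 2 := by
        have h1 : v j ^ 2 = (sc ^ j) ^ 2 * u j ^ 2 := by rw [hv]; ring
        rw [h1, hpowsc]
      have ec : c ^ j * (2 * η₂ * (‖e j‖ * u (j + 1))) = 2 * (β j * v (j + 1)) := by
        have h1 : β j * v (j + 1) = η₂ * ((sc ^ j) ^ 2 * (‖e j‖ * u (j + 1))) := by
          rw [hβ, hv]
          simp only [pow_succ]
          field_simp
        rw [h1, hpowsc]; ring
      rw [Finset.sum_range_succ, Finset.sum_range_succ]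
      linarith [ih, hk', ea, eb, ec]
  -- bound on the weighted distances
  have hvb : ∀ j, v j ≤ v 0 + 2 * ∑ s ∈ Finset.range j, β s := by
    apply seq_bound v β hvnn hβnn
    intro j
    have hT := T j
    have hSnn : 0 ≤ ∑ s ∈ Finset.range j, c ^ s * (Q (lam (s + 1)) - Q lamStar) :=
      Finset.sum_nonneg fun s _ => mul_nonneg (by positivity) (hΔnn s)
    linarith only [hT, mul_nonneg hηpos.le hSnn]
  -- rpow simplification
  have hrpow : ∀ s : ℕ, c ^ ((s : ℝ) / 2) = sc ^ s := by
    intro s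
    rw [show (s : ℝ) / 2 = 1 / 2 * (s : ℝ) by ring, Real.rpow_mul hcpos.le,
      Real.rpow_natCast, ← Real.sqrt_eq_rpow]
  -- abbreviations
  have hEsum : (∑ s ∈ Finset.range m, Real.sqrt η₂ * c ^ ((s : ℝ) / 2) * ‖e s‖)
      = ∑ s ∈ Finset.range m, Real.sqrt η₂ * sc ^ s * ‖e s‖ :=
    Finset.sum_congr rfl fun s _ => by rw [hrpow s]
  have hzpow : c ^ (-(m : ℤ) + 1) = (c ^ (m - 1))⁻¹ := by
    rw [show -(m : ℤ) + 1 = -(((m - 1 : ℕ)) : ℤ) by push_cast [Nat.cast_sub hm]; ring,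
      zpow_neg, zpow_natCast]
  rw [hEsum, hzpow]
  set E : ℝ := ∑ s ∈ Finset.range m, Real.sqrt η₂ * sc ^ s * ‖e s‖ with hE
  set B : ℝ := ∑ s ∈ Finset.range m, β s with hB
  set W : ℝ := ∑ s ∈ Finset.range m, c ^ s with hW
  set S : ℝ := ∑ s ∈ Finset.range m, c ^ s * (Q (lam (s + 1)) - Q lamStar) with hS
  set r : ℝ := (c ^ (m - 1))⁻¹ with hr
  have hEnn : 0 ≤ E := Finset.sum_nonneg fun s _ => by positivity
  have hBnn2 : 0 ≤ B := Finset.sum_nonneg fun s _ => hβnn s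
  have hWpos : 0 < W := by
    rw [hW]
    exact Finset.sum_pos (fun s _ => pow_pos hcpos s) ⟨0, Finset.mem_range.2 (by omega)⟩
  have hrpos : 0 < r := by rw [hr]; positivity
  have hBsc : B * sc = Real.sqrt η₂ * E := by
    rw [hB, hE, Finset.sum_mul, Finset.mul_sum]
    refine Finset.sum_congr rfl fun s _ => ?_
    rw [hβ]
    simp only
    rw [div_mul_cancel₀ _ hscne]
    nth_rewrite 1 [← Real.mul_self_sqrt hηpos.le]
    ring
  have hEB : η₂ * E ^ 2 = c * B ^ 2 := by
    have h1 : c * B ^ 2 = (B * sc) ^ 2 := by rw [mul_pow, hsc2]; ring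
    rw [h1, hBsc, mul_pow, Real.sq_sqrt hηpos.le]
  have hv0 : v 0 = u 0 := by rw [hv]; simp
  have hv0sq : v 0 ^ 2 = u 0 ^ 2 := by rw [hv0]
  have h2ηpos : (0:ℝ) < 2 * η₂ := by positivity
  rw [div_le_iff₀ hWpos, show ‖lamStar - lam 0‖ = u 0 from rfl]
  by_cases hm1 : m = 1
  · -- base case m = 1
    subst hm1
    have hW1 : W = 1 := by rw [hW]; simp
    have hr1 : r = 1 := by rw [hr]; simp
    have hS1 : S = Q (lam 1) - Q lamStar := by rw [hS]; simp
    have hE1 : E = Real.sqrt η₂ * ‖e 0‖ := by rw [hE]; simp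
    have hEsq : E ^ 2 = η₂ * ‖e 0‖ ^ 2 := by
      rw [hE1, mul_pow, Real.sq_sqrt hηpos.le]
    have hT1 := T 1
    simp only [Finset.sum_range_one, pow_zero, one_mul, zero_add] at hT1
    have hβ0 : β 0 = η₂ * ‖e 0‖ / sc := by rw [hβ]; simp
    have hβ0sq : β 0 ^ 2 ≤ (η₂ * ‖e 0‖) ^ 2 := by
      rw [hβ0, div_pow, hsc2]
      exact div_le_self (by positivity) hc1
    have hstep1 : 2 * η₂ * S ≤ u 0 ^ 2 + β 0 ^ 2 := by
      have hsq := sq_nonneg (v 1 - β 0)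
      rw [hS1]
      linarith only [hT1, hsq, hv0sq]
    rw [hW1, hr1, mul_one]
    rw [← mul_le_mul_iff_of_pos_left h2ηpos]
    have hrhs : 2 * η₂ * (1 / (2 * η₂) * u 0 ^ 2 + 2 * 1 * E ^ 2)
        = u 0 ^ 2 + 4 * η₂ * E ^ 2 := by
      field_simp
      ring
    rw [hrhs, hEsq]
    linarith only [hstep1, hβ0sq, sq_nonneg (η₂ * ‖e 0‖)]
  · -- case m ≥ 2
    obtain ⟨k, rfl⟩ : ∃ k, m = k + 2 := ⟨m - 2, by omega⟩
    -- sum of errors bound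
    have hsum2 : ∑ s ∈ Finset.range (k + 2), β s * v (s + 1) ≤ B * (v 0 + 2 * B) := by
      have hvs : ∀ s ∈ Finset.range (k + 2), β s * v (s + 1) ≤ β s * (v 0 + 2 * B) := by
        intro s hs
        refine mul_le_mul_of_nonneg_left ?_ (hβnn s)
        have h1 := hvb (s + 1)
        have h2 : ∑ i ∈ Finset.range (s + 1), β i ≤ B := by
          rw [hB]
          exact Finset.sum_le_sum_of_subset_of_nonneg
            (Finset.range_subset_range.2 (Finset.mem_range.1 hs)) fun i _ _ => hβnn i
        linarith
      calc ∑ s ∈ Finset.range (k + 2), β s * v (s + 1)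
          ≤ ∑ s ∈ Finset.range (k + 2), β s * (v 0 + 2 * B) := Finset.sum_le_sum hvs
        _ = B * (v 0 + 2 * B) := by rw [← Finset.sum_mul, ← hB]
    have hTm := T (k + 2)
    rw [← hS] at hTm
    have h2S : 2 * η₂ * S ≤ u 0 ^ 2 + 2 * B * u 0 + 4 * B ^ 2 := by
      have hBv0 : B * (v 0 + 2 * B) = B * u 0 + 2 * B ^ 2 := by rw [hv0]; ring
      linarith only [hTm, hsum2, sq_nonneg (v (k + 2)), hBv0, hv0sq]
    -- main scalar inequality (multiplied by c)
    have hEB2 : c * (η₂ * E ^ 2) = c * (c * B ^ 2) := by rw [hEB]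
    have hfin : c * (2 * η₂ * S) ≤ (c + 1) * (u 0 ^ 2 + 4 * (η₂ * E ^ 2)) := by
      have Hc := mul_le_mul_of_nonneg_left h2S hcpos.le
      linarith only [Hc, hEB, hEB2, sq_nonneg (u 0 - 2 * c * B),
        mul_nonneg (mul_nonneg hcpos.le hBnn2) (hunn 0)]
    -- weight bound
    have hmm1 : k + 2 - 1 = k + 1 := by omega
    rw [hmm1] at hr
    have hpne : (c : ℝ) ^ (k + 1) ≠ 0 := pow_ne_zero _ hcne
    have hWge : c ^ (k + 1) + c ^ k ≤ W := by
      rw [hW]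
      have hsub : ({k + 1, k} : Finset ℕ) ⊆ Finset.range (k + 2) := by
        intro i hi
        simp only [Finset.mem_insert, Finset.mem_singleton] at hi
        rcases hi with rfl | rfl <;> exact Finset.mem_range.2 (by omega)
      have hpair : ∑ s ∈ ({k + 1, k} : Finset ℕ), c ^ s = c ^ (k + 1) + c ^ k := by
        rw [Finset.sum_pair (by omega : k + 1 ≠ k)]
      rw [← hpair]
      exact Finset.sum_le_sum_of_subset_of_nonneg hsub fun i _ _ => by positivity
    have hKeq : c * ((c ^ (k + 1) + c ^ k) * r) = c + 1 := by
      rw [hr]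
      field_simp
      ring
    have hK : c + 1 ≤ c * (W * r) := by
      have h1 : (c ^ (k + 1) + c ^ k) * r ≤ W * r :=
        mul_le_mul_of_nonneg_right hWge hrpos.le
      have h2 := mul_le_mul_of_nonneg_left h1 hcpos.le
      rw [hKeq] at h2
      exact h2
    -- conclude
    have hXnn : 0 ≤ u 0 ^ 2 + 4 * (η₂ * E ^ 2) :=
      add_nonneg (sq_nonneg _) (mul_nonneg (by norm_num) (mul_nonneg hηpos.le (sq_nonneg _)))
    have hchain : c * (2 * η₂ * S) ≤ (c * (W * r)) * (u 0 ^ 2 + 4 * (η₂ * E ^ 2)) :=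
      le_trans hfin (mul_le_mul_of_nonneg_right hK hXnn)
    have hfactor : (0:ℝ) < 2 * η₂ * c := by positivity
    have hgoal2 : 2 * η₂ * (r / (2 * η₂) * u 0 ^ 2 + 2 * r * E ^ 2)
        = r * u 0 ^ 2 + 4 * η₂ * (r * E ^ 2) := by
      have h2ne : (2:ℝ) * η₂ ≠ 0 := ne_of_gt h2ηpos
      field_simp
      ring
    have hfinal : 2 * η₂ * c * S
        ≤ 2 * η₂ * c * ((r / (2 * η₂) * u 0 ^ 2 + 2 * r * E ^ 2) * W) := by
      have heq : 2 * η₂ * c * ((r / (2 * η₂) * u 0 ^ 2 + 2 * r * E ^ 2) * W)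
          = c * W * (2 * η₂ * (r / (2 * η₂) * u 0 ^ 2 + 2 * r * E ^ 2)) := by ring
      rw [heq, hgoal2]
      have heq2 : c * W * (r * u 0 ^ 2 + 4 * η₂ * (r * E ^ 2))
          = (c * (W * r)) * (u 0 ^ 2 + 4 * (η₂ * E ^ 2)) := by ring
      rw [heq2]
      linarith only [hchain]
    exact (mul_le_mul_iff_of_pos_left hfactor).1 hfinal
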